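/- Let G be a linear algebraic group over an algebraically closed field K acting by automorphisms on a K-algebra S, let R = K[a_1,…,a_n] ⊆ S, and suppose there exist g_1,…,g_n ∈ K[G] ⊗ R such that σ^{−1}·a_i = g_i(σ) for all σ ∈ G. Then, with D̂ := (y_1 − g_1, …, y_n − g_n) ⊆ K[G] ⊗ S[y_1,…,y_n], the Derksen ideal is the elimination ideal: D_{a_1,…,a_n} = S[y_1,…,y_n] ∩ D̂. -/

import Mathlib

open MvPolynomial
set_option synthInstance.maxHeartbeats 4000000
set_option maxHeartbeats 4000000
set_option maxSynthPendingDepth 5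
noncomputable section

namespace AlgGeo

variable {K : Type*} [Field K]

/-- The zero locus in affine `N`-space of a set of polynomials. -/
def zeroLocus {N : ℕ} (S : Set (MvPolynomial (Fin N) K)) : Set (Fin N → K) :=
  {x | ∀ f ∈ S, eval x f = 0}

/-- An (affine) algebraic set: the zero locus of a set of polynomials. -/
def IsAlgebraicSet {N : ℕ} (V : Set (Fin N → K)) : Prop :=
  ∃ S : Set (MvPolynomial (Fin N) K), V = zeroLocus S

/-- The vanishing ideal of a subset of affine `N`-space. -/
def vanishingIdeal {N : ℕ} (V : Set (Fin N → K)) :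
    Ideal (MvPolynomial (Fin N) K) where
  carrier := {f | ∀ x ∈ V, eval x f = 0}
  add_mem' := by
    intro a b ha hb x hx
    simp only [Set.mem_setOf_eq, map_add, ha x hx, hb x hx, add_zero]
  zero_mem' := by intro x _; simp
  smul_mem' := by
    intro c a ha x hx
    simp only [Set.mem_setOf_eq, smul_eq_mul, map_mul, ha x hx, mul_zero]

/-- The Zariski closure of a subset of affine `N`-space. -/
def zclosure {N : ℕ} (V : Set (Fin N → K)) : Set (Fin N → K) :=
  zeroLocus (vanishingIdeal V : Set (MvPolynomial (Fin N) K))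

/-- The Krull dimension of a subset of affine `N`-space (the Krull dimension of
its coordinate ring). -/
def dimOfSet {N : ℕ} (V : Set (Fin N → K)) : WithBot (WithTop ℕ) :=
  ringKrullDim (MvPolynomial (Fin N) K ⧸ vanishingIdeal V)

/-- The coordinate ring of `V`: the `K`-algebra of functions `V → K` that are
restrictions of polynomials. -/
def coordRing {N : ℕ} (V : Set (Fin N → K)) : Subalgebra K (↥V → K) where
  carrier := {f | ∃ p : MvPolynomial (Fin N) K, ∀ x : V, f x = eval (x : Fin N → K) p}
  mul_mem' := by
    rintro f g ⟨p, hp⟩ ⟨q, hq⟩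
    exact ⟨p * q, fun x => by simp [hp x, hq x]⟩
  one_mem' := ⟨1, fun x => by simp⟩
  add_mem' := by
    rintro f g ⟨p, hp⟩ ⟨q, hq⟩
    exact ⟨p + q, fun x => by simp [hp x, hq x]⟩
  zero_mem' := ⟨0, fun x => by simp⟩
  algebraMap_mem' := fun c => ⟨C c, fun x => by simp⟩

/-- Evaluation of a regular function at a point, as a ring homomorphism. -/
def evAt {N : ℕ} {V : Set (Fin N → K)} (x : ↥V) : ↥(coordRing V) →+* K :=
  (Pi.evalRingHom (fun _ : ↥V => K) x).comp (coordRing V).val.toRingHom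

/-- Evaluation of a regular function at a point, as a `K`-algebra homomorphism. -/
def evAtAlg {N : ℕ} {V : Set (Fin N → K)} (x : ↥V) : ↥(coordRing V) →ₐ[K] K :=
  (Pi.evalAlgHom K (fun _ : ↥V => K) x).comp (coordRing V).val

/-- A linear algebraic group over `K`, realized as an algebraic subset of affine
`m`-space whose group operations are given by polynomial maps. -/
structure AlgGroup (K : Type*) [Field K] where
  m : ℕ
  car : Set (Fin m → K)
  isAlg : IsAlgebraicSet car
  one : Fin m → K
  one_mem : one ∈ car
  mul : (Fin m → K) → (Fin m → K) → (Fin m → K)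
  inv : (Fin m → K) → (Fin m → K)
  mul_polynomial : ∀ i : Fin m, ∃ p : MvPolynomial (Fin m ⊕ Fin m) K,
    ∀ x ∈ car, ∀ y ∈ car, mul x y i = eval (Sum.elim x y) p
  inv_polynomial : ∀ i : Fin m, ∃ p : MvPolynomial (Fin m) K,
    ∀ x ∈ car, inv x i = eval x p
  mul_mem : ∀ {x y}, x ∈ car → y ∈ car → mul x y ∈ car
  inv_mem : ∀ {x}, x ∈ car → inv x ∈ car
  mul_assoc' : ∀ x ∈ car, ∀ y ∈ car, ∀ z ∈ car, mul (mul x y) z = mul x (mul y z)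
  one_mul' : ∀ x ∈ car, mul one x = x
  mul_one' : ∀ x ∈ car, mul x one = x
  inv_mul' : ∀ x ∈ car, mul (inv x) x = one

instance (G : AlgGroup K) : Monoid ↥G.car where
  mul a b := ⟨G.mul a b, G.mul_mem a.2 b.2⟩
  one := ⟨G.one, G.one_mem⟩
  mul_assoc a b c := Subtype.ext (G.mul_assoc' _ a.2 _ b.2 _ c.2)
  one_mul a := Subtype.ext (G.one_mul' _ a.2)
  mul_one a := Subtype.ext (G.mul_one' _ a.2)

/-- The inverse of a group element, as a point of the group. -/
def AlgGroup.invPt (G : AlgGroup K) (σ : ↥G.car) : ↥G.car := ⟨G.inv σ, G.inv_mem σ.2⟩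

/-- An affine `G`-variety: an algebraic subset of affine `n`-space with an
action of `G` given by polynomial maps. -/
structure GVariety (K : Type*) [Field K] (G : AlgGroup K) where
  n : ℕ
  car : Set (Fin n → K)
  isAlg : IsAlgebraicSet car
  act : (Fin G.m → K) → (Fin n → K) → (Fin n → K)
  act_polynomial : ∀ i : Fin n, ∃ p : MvPolynomial (Fin n ⊕ Fin G.m) K,
    ∀ σ ∈ G.car, ∀ x ∈ car, act σ x i = eval (Sum.elim x σ) p
  act_mem : ∀ {σ x}, σ ∈ G.car → x ∈ car → act σ x ∈ car
  act_one : ∀ x ∈ car, act G.one x = x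
  act_mul : ∀ σ ∈ G.car, ∀ τ ∈ G.car, ∀ x ∈ car,
    act (G.mul σ τ) x = act σ (act τ x)
  act_regular : ∀ σ ∈ G.car, ∀ p : MvPolynomial (Fin n) K,
    ∃ q : MvPolynomial (Fin n) K, ∀ x ∈ car, eval (act σ x) p = eval x q

namespace GVariety

variable {G : AlgGroup K} (X : GVariety K G)

/-- The action on points. -/
def actPt (σ : ↥G.car) (x : ↥X.car) : ↥X.car := ⟨X.act σ x, X.act_mem σ.2 x.2⟩

/-- The action of `σ ∈ G` on functions on `X`: `(σ·f)(x) = f(σ⁻¹·x)`. -/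
def gactFun (σ : ↥G.car) (f : ↥X.car → K) : ↥X.car → K :=
  fun x => f (X.actPt (G.invPt σ) x)

theorem gactFun_mem (σ : ↥G.car) {f : ↥X.car → K} (hf : f ∈ coordRing X.car) :
    X.gactFun σ f ∈ coordRing X.car := by
  obtain ⟨p, hp⟩ := hf
  obtain ⟨q, hq⟩ := X.act_regular (G.inv σ) (G.inv_mem σ.2) p
  refine ⟨q, fun x => ?_⟩
  have : X.gactFun σ f x = f (X.actPt (G.invPt σ) x) := rfl
  rw [this, hp]
  exact hq (x : Fin X.n → K) x.2

/-- The action of `σ ∈ G` on the coordinate ring of `X`, as a ring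
homomorphism. -/
def gactHom (σ : ↥G.car) : ↥(coordRing X.car) →+* ↥(coordRing X.car) where
  toFun f := ⟨X.gactFun σ f, X.gactFun_mem σ f.2⟩
  map_one' := Subtype.ext (funext fun _ => rfl)
  map_mul' _ _ := Subtype.ext (funext fun _ => rfl)
  map_zero' := Subtype.ext (funext fun _ => rfl)
  map_add' _ _ := Subtype.ext (funext fun _ => rfl)

/-- The orbit of a point of `X`. -/
def orbit (x : ↥X.car) : Set (Fin X.n → K) :=
  {y | ∃ σ ∈ G.car, X.act σ (x : Fin X.n → K) = y}

/-- `d` is the maximal dimension of a `G`-orbit in `X`. -/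
def IsMaxOrbitDim (d : ℕ) : Prop :=
  (∀ x : ↥X.car, dimOfSet (X.orbit x) ≤ (d : WithBot (WithTop ℕ))) ∧
  ∃ x : ↥X.car, dimOfSet (X.orbit x) = (d : WithBot (WithTop ℕ))

end GVariety

end AlgGeo

namespace AlgGeo

open scoped TensorProduct

section Aux

variable {K : Type*} [Field K]

lemma mem_span_X_sub_C {B : Type*} [CommRing B] {n : ℕ} (c : Fin n → B)
    (p : MvPolynomial (Fin n) B) :
    p ∈ Ideal.span (Set.range fun i => (X i : MvPolynomial (Fin n) B) - C (c i)) ↔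
      eval c p = 0 := by
  set I := Ideal.span (Set.range fun i => (X i : MvPolynomial (Fin n) B) - C (c i)) with hI
  have key : ∀ q : MvPolynomial (Fin n) B, q - C (eval c q) ∈ I := by
    intro q
    induction q using MvPolynomial.induction_on with
    | C a => simp
    | add p q hp hq =>
      have := I.add_mem hp hq
      simpa [sub_add_sub_comm] using this
    | mul_X q i hq =>
      have h1 : q * X i - C (eval c (q * X i)) =
          q * (X i - C (c i)) + (q - C (eval c q)) * C (c i) := by
        ring_nf
        simp [eval_X, eval_C]
        ring
      rw [h1]
      exact I.add_mem (I.mul_mem_left _ (Ideal.subset_span ⟨i, rfl⟩))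
        (I.mul_mem_right _ hq)
  constructor
  · intro hp
    have hle : I ≤ RingHom.ker (eval c) := by
      rw [hI, Ideal.span_le]
      rintro _ ⟨i, rfl⟩
      simp [RingHom.mem_ker]
    simpa [RingHom.mem_ker] using hle hp
  · intro h
    have := key p
    rwa [h, map_zero, sub_zero] at this

open scoped TensorProduct in
/-- Evaluation maps at all points of `V` are jointly injective on
`coordRing V ⊗ S`. -/
lemma tensor_eval_injective {N : ℕ} {V : Set (Fin N → K)}
    {S : Type*} [CommRing S] [Algebra K S]
    (t : ↥(coordRing V) ⊗[K] S)
    (h : ∀ x : ↥V,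
      Algebra.TensorProduct.lift ((Algebra.ofId K S).comp (evAtAlg x))
        (AlgHom.id K S) (fun _ _ => Commute.all _ _) t = 0) : t = 0 := by
  classical
  set A := ↥(coordRing V)
  let b := Module.Basis.ofVectorSpace K S
  let e : A ⊗[K] S ≃ₗ[K] (Module.Basis.ofVectorSpaceIndex K S →₀ A) :=
    (TensorProduct.congr (LinearEquiv.refl K A) b.repr).trans
      (TensorProduct.finsuppScalarRight K K A _)
  have key : ∀ (u : A ⊗[K] S) (x : ↥V) (j : Module.Basis.ofVectorSpaceIndex K S),
      b.repr (Algebra.TensorProduct.lift ((Algebra.ofId K S).comp (evAtAlg x))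
        (AlgHom.id K S) (fun _ _ => Commute.all _ _) u) j = ((e u) j : ↥V → K) x := by
    intro u
    induction u using TensorProduct.induction_on with
    | zero => simp
    | tmul f s =>
      intro x j
      have h1 : Algebra.TensorProduct.lift ((Algebra.ofId K S).comp (evAtAlg x))
          (AlgHom.id K S) (fun _ _ => Commute.all _ _) (f ⊗ₜ[K] s)
          = (f : ↥V → K) x • s := by
        rw [Algebra.TensorProduct.lift_tmul]
        simp [Algebra.ofId_apply, evAtAlg, Algebra.smul_def]
      have h2 : (e (f ⊗ₜ[K] s)) j = (b.repr s) j • f := by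
        simp only [e, LinearEquiv.trans_apply, TensorProduct.congr_tmul,
          LinearEquiv.refl_apply]
        exact TensorProduct.finsuppScalarRight_apply_tmul_apply f (b.repr s) j
      rw [h1, h2, map_smul, Finsupp.smul_apply, smul_eq_mul]
      exact mul_comm _ _
    | add u v hu hv =>
      intro x j
      simp only [map_add, Finsupp.add_apply] at *
      rw [hu x j, hv x j]
      rfl
  have he : e t = 0 := by
    refine Finsupp.ext fun j => Subtype.ext (_root_.funext fun x => ?_)
    have hk := key t x j
    rw [h x, map_zero, Finsupp.zero_apply] at hk
    simp [← hk]
  simpa using e.map_eq_zero_iff.mp he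

end Aux

/-- If `σ⁻¹·a_i = g_i(σ)` with `g_i ∈ K[G] ⊗ R`, then the
Derksen ideal is the elimination ideal
`D_{a_1,…,a_n} = S[y_1,…,y_n] ∩ (y_1 − g_1, …, y_n − g_n)`. -/
theorem statement16 {K : Type*} [Field K] [IsAlgClosed K]
    (G : AlgGroup K)
    (S : Type*) [CommRing S] [Algebra K S]
    [MulSemiringAction ↥G.car S]
    -- G acts by K-algebra automorphisms
    (hKfix : ∀ (σ : ↥G.car) (c : K), σ • (algebraMap K S c) = algebraMap K S c)
    {nn : ℕ} (a : Fin nn → S)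
    -- R = K[a_1,…,a_n] is G-stable
    (hstab : ∀ (σ : ↥G.car), ∀ x ∈ Algebra.adjoin K (Set.range a),
      σ • x ∈ Algebra.adjoin K (Set.range a))
    -- the elements g_i ∈ K[G] ⊗ R with σ⁻¹ · a_i = g_i(σ)
    (g : Fin nn → (↥(coordRing G.car) ⊗[K] S))
    (hgR : ∀ i, g i ∈ (Algebra.TensorProduct.map (AlgHom.id K ↥(coordRing G.car))
      (Algebra.adjoin K (Set.range a)).val).range)
    (hg : ∀ (σ : ↥G.car) (i : Fin nn),
      (G.invPt σ) • a i =
        Algebra.TensorProduct.lift ((Algebra.ofId K S).comp (evAtAlg σ))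
          (AlgHom.id K S) (fun _ _ => Commute.all _ _) (g i)) :
    (⨅ σ : ↥G.car, Ideal.span (Set.range fun i : Fin nn =>
        (X i : MvPolynomial (Fin nn) S) - C (σ • a i))) =
      Ideal.comap
        (MvPolynomial.map (Algebra.TensorProduct.includeRight :
          S →ₐ[K] ↥(coordRing G.car) ⊗[K] S).toRingHom)
        (Ideal.span (Set.range fun i : Fin nn =>
          (X i : MvPolynomial (Fin nn) (↥(coordRing G.car) ⊗[K] S)) - C (g i))) := by
  classical
  -- the evaluation algebra maps
  let ε : ↥G.car → (↥(coordRing G.car) ⊗[K] S →ₐ[K] S) := fun σ =>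
    Algebra.TensorProduct.lift ((Algebra.ofId K S).comp (evAtAlg σ)) (AlgHom.id K S)
      (fun _ _ => Commute.all _ _)
  -- inversion is an involution
  have hmul : ∀ τ : ↥G.car, G.invPt τ * τ = 1 := fun τ =>
    Subtype.ext (G.inv_mul' τ.1 τ.2)
  have hinvinv : ∀ σ : ↥G.car, G.invPt (G.invPt σ) = σ := by
    intro σ
    calc G.invPt (G.invPt σ) = G.invPt (G.invPt σ) * 1 := (mul_one _).symm
      _ = G.invPt (G.invPt σ) * (G.invPt σ * σ) := by rw [hmul σ]
      _ = (G.invPt (G.invPt σ) * G.invPt σ) * σ := (mul_assoc _ _ _).symm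
      _ = σ := by rw [hmul (G.invPt σ), one_mul]
  -- Step C: evaluation commutes with polynomial evaluation
  have stepC : ∀ (σ : ↥G.car) (p : MvPolynomial (Fin nn) S),
      ε σ (eval g (MvPolynomial.map (Algebra.TensorProduct.includeRight :
          S →ₐ[K] ↥(coordRing G.car) ⊗[K] S).toRingHom p)) =
        eval (fun i => ε σ (g i)) p := by
    intro σ p
    induction p using MvPolynomial.induction_on with
    | C s =>
      rw [map_C, eval_C, eval_C]
      show ε σ ((1 : ↥(coordRing G.car)) ⊗ₜ[K] s) = s
      rw [Algebra.TensorProduct.lift_tmul]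
      simp
    | add p q hp hq =>
      rw [map_add, map_add, map_add, hp, hq, map_add]
    | mul_X p i hp =>
      rw [map_mul, map_X, map_mul, eval_X, map_mul, hp, map_mul, eval_X]
  ext p
  rw [Ideal.mem_iInf, Ideal.mem_comap,
    mem_span_X_sub_C g (MvPolynomial.map (Algebra.TensorProduct.includeRight :
      S →ₐ[K] ↥(coordRing G.car) ⊗[K] S).toRingHom p)]
  constructor
  · intro hσ
    apply tensor_eval_injective
    intro σ
    show ε σ _ = 0
    rw [stepC σ p]
    have hfun : (fun i => ε σ (g i)) = fun i => G.invPt σ • a i :=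
      _root_.funext fun i => (hg σ i).symm
    rw [hfun]
    exact (mem_span_X_sub_C (fun i => G.invPt σ • a i) p).mp (hσ (G.invPt σ))
  · intro h0 σ
    rw [mem_span_X_sub_C (fun i => σ • a i) p]
    have hσ := stepC (G.invPt σ) p
    rw [h0, map_zero] at hσ
    have hfun : (fun i => σ • a i) = fun i => ε (G.invPt σ) (g i) :=
      _root_.funext fun i => by rw [← hg (G.invPt σ) i, hinvinv]
    rw [hfun]
    exact hσ.symm


end AlgGeo
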